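/- Let a ∈ (0,1) and let Z be a nonnegative random variable with E[exp(-λZ)] = exp(-λ^a) for all λ ≥ 0. Then for every real s < a one has E[Z^s] < ∞ and E[Z^s] = Γ(1 - s/a) / Γ(1 - s). -/

import Mathlib

open MeasureTheory ProbabilityTheory
open scoped MeasureTheory

section AuxLemmas
open Real Set Filter Topology

private lemma aux_int_rpow_exp_mul {q b : ℝ} (hq : -1 < q) (hb : 0 < b) :
    IntegrableOn (fun x : ℝ => x ^ q * Real.exp (-(b * x))) (Ioi (0:ℝ)) := by
  have h : IntegrableOn (fun y : ℝ => Real.exp (-y) * y ^ q) (Ioi (0:ℝ)) := by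
    simpa using Real.GammaIntegral_convergent (s := q + 1) (by linarith)
  have h2 : IntegrableOn (fun x : ℝ => Real.exp (-(b*x)) * (b*x) ^ q) (Ioi (0:ℝ)) := by
    have := (integrableOn_Ioi_comp_mul_left_iff
      (fun y : ℝ => Real.exp (-y) * y ^ q) 0 hb).mpr (by simpa using h)
    simpa using this
  have h3 : IntegrableOn
      (fun x : ℝ => b ^ (-q) * (Real.exp (-(b*x)) * (b*x) ^ q)) (Ioi (0:ℝ)) :=
    h2.const_mul _
  refine h3.congr_fun (fun x hx => ?_) measurableSet_Ioi
  have hx : (0:ℝ) < x := hx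
  beta_reduce
  rw [mul_rpow hb.le hx.le, Real.rpow_neg hb.le]
  have hbq : (b:ℝ) ^ q ≠ 0 := (Real.rpow_pos_of_pos hb q).ne'
  field_simp

private lemma aux_int_rpow_exp_rpow {q p : ℝ} (hq : -1 < q) (hp : 0 < p) :
    IntegrableOn (fun x : ℝ => x ^ q * Real.exp (-x ^ p)) (Ioi (0:ℝ)) := by
  have h : IntegrableOn (fun y : ℝ => y ^ ((q+1)/p - 1) * Real.exp (-y)) (Ioi (0:ℝ)) := by
    have := Real.GammaIntegral_convergent (s := (q+1)/p) (div_pos (by linarith) hp)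
    exact this.congr_fun (fun x hx => mul_comm _ _) measurableSet_Ioi
  have h2 := (integrableOn_Ioi_comp_rpow_iff'
    (fun y : ℝ => y ^ ((q+1)/p - 1) * Real.exp (-y)) hp.ne').mpr h
  refine h2.congr_fun (fun x hx => ?_) measurableSet_Ioi
  have hx : (0:ℝ) < x := hx
  beta_reduce
  rw [smul_eq_mul, ← Real.rpow_mul hx.le, ← mul_assoc, ← Real.rpow_add hx]
  congr 2
  field_simp
  ring

private lemma one_sub_exp_bounds {t : ℝ} (ht : 0 ≤ t) :
    0 ≤ 1 - Real.exp (-t) ∧ 1 - Real.exp (-t) ≤ t := by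
  constructor
  · have : Real.exp (-t) ≤ 1 := Real.exp_le_one_iff.mpr (by linarith)
    linarith
  · have := Real.add_one_le_exp (-t)
    linarith

private lemma aux_int_one_sub_exp {r p c : ℝ} (hr : 0 < r) (hrp : r < p) (hc : 0 ≤ c) :
    IntegrableOn (fun x : ℝ => x ^ (-r-1) * (1 - Real.exp (-(c * x ^ p)))) (Ioi (0:ℝ)) := by
  have hmeas : ∀ s : Set ℝ, MeasurableSet s → AEStronglyMeasurable
      (fun x : ℝ => x ^ (-r-1) * (1 - Real.exp (-(c * x ^ p)))) (volume.restrict s) := by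
    intro s hs
    apply Measurable.aestronglyMeasurable
    fun_prop
  rw [← Ioc_union_Ioi_eq_Ioi (zero_le_one' ℝ), integrableOn_union]
  constructor
  · -- on Ioc 0 1, dominate by c * x ^ (p - r - 1)
    have hint : IntegrableOn (fun x : ℝ => c * x ^ (p - r - 1)) (Ioc (0:ℝ) 1) := by
      have : IntervalIntegrable (fun x : ℝ => x ^ (p - r - 1)) volume 0 1 :=
        intervalIntegral.intervalIntegrable_rpow' (by linarith)
      exact ((intervalIntegrable_iff_integrableOn_Ioc_of_le zero_le_one).mp this).const_mul c
    refine Integrable.mono' hint (hmeas _ measurableSet_Ioc) ?_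
    filter_upwards [ae_restrict_mem measurableSet_Ioc] with x hx
    have hx0 : (0:ℝ) < x := hx.1
    have ht : 0 ≤ c * x ^ p := mul_nonneg hc (rpow_nonneg hx0.le p)
    obtain ⟨h1, h2⟩ := one_sub_exp_bounds ht
    rw [Real.norm_eq_abs, abs_of_nonneg (mul_nonneg (rpow_nonneg hx0.le _) h1)]
    calc x ^ (-r-1) * (1 - Real.exp (-(c * x ^ p))) ≤ x ^ (-r-1) * (c * x ^ p) := by
          exact mul_le_mul_of_nonneg_left h2 (rpow_nonneg hx0.le _)
      _ = c * x ^ (p - r - 1) := by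
          rw [show x ^ (-r-1) * (c * x ^ p) = c * (x ^ (-r-1) * x ^ p) by ring,
            ← Real.rpow_add hx0]
          ring_nf
  · -- on Ioi 1, dominate by x ^ (-r-1)
    have hint : IntegrableOn (fun x : ℝ => x ^ (-r-1)) (Ioi (1:ℝ)) :=
      integrableOn_Ioi_rpow_of_lt (by linarith) one_pos
    refine Integrable.mono' hint (hmeas _ measurableSet_Ioi) ?_
    filter_upwards [ae_restrict_mem measurableSet_Ioi] with x hx
    have hx0 : (0:ℝ) < x := lt_trans one_pos hx
    have ht : 0 ≤ c * x ^ p := mul_nonneg hc (rpow_nonneg hx0.le p)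
    obtain ⟨h1, h2⟩ := one_sub_exp_bounds ht
    rw [Real.norm_eq_abs, abs_of_nonneg (mul_nonneg (rpow_nonneg hx0.le _) h1)]
    have hle1 : 1 - Real.exp (-(c * x ^ p)) ≤ 1 := by
      have := Real.exp_pos (-(c * x ^ p)); linarith
    calc x ^ (-r-1) * (1 - Real.exp (-(c * x ^ p))) ≤ x ^ (-r-1) * 1 :=
          mul_le_mul_of_nonneg_left hle1 (rpow_nonneg hx0.le _)
      _ = x ^ (-r-1) := mul_one _
private lemma aux_integral_one_sub_exp {s z : ℝ} (hs0 : 0 < s) (hs1 : s < 1) (hz : 0 ≤ z) :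
    ∫ x in Ioi (0:ℝ), x ^ (-s-1) * (1 - Real.exp (-(x * z)))
      = Real.Gamma (1-s) / s * z ^ s := by
  rcases hz.eq_or_lt with rfl | hz
  · simp [Real.zero_rpow hs0.ne']
  set F : ℝ → ℝ := fun x => (-1/s) * (x ^ (-s) * (1 - Real.exp (-(x * z)))) with hF
  set f' : ℝ → ℝ := fun x =>
    x ^ (-s-1) * (1 - Real.exp (-(x * z))) - (z/s) * (x ^ (-s) * Real.exp (-(x * z))) with hf'
  have hF0 : F 0 = 0 := by simp [hF]
  have T1int : IntegrableOn (fun x : ℝ => x ^ (-s-1) * (1 - Real.exp (-(x * z)))) (Ioi 0) := by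
    have := aux_int_one_sub_exp (r := s) (p := 1) (c := z) hs0 hs1 hz.le
    refine this.congr_fun (fun x hx => ?_) measurableSet_Ioi
    beta_reduce
    rw [Real.rpow_one, mul_comm z x]
  have T2int : IntegrableOn (fun x : ℝ => x ^ (-s) * Real.exp (-(x * z))) (Ioi 0) := by
    have := aux_int_rpow_exp_mul (q := -s) (b := z) (by linarith) hz
    refine this.congr_fun (fun x hx => ?_) measurableSet_Ioi
    beta_reduce
    rw [mul_comm z x]
  have f'int : IntegrableOn f' (Ioi 0) := T1int.sub (T2int.const_mul _)
  have hderiv : ∀ x ∈ Ioi (0:ℝ), HasDerivAt F (f' x) x := by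
    intro x hx
    have hx : (0:ℝ) < x := hx
    have hg : HasDerivAt (fun x : ℝ => x ^ (-s)) (-s * x ^ (-s-1)) x :=
      Real.hasDerivAt_rpow_const (Or.inl hx.ne')
    have hexp : HasDerivAt (fun x : ℝ => Real.exp (-(x * z)))
        (Real.exp (-(x * z)) * (-z)) x := by
      have hinner : HasDerivAt (fun x : ℝ => -(x * z)) (-z) x := by
        simpa using ((hasDerivAt_id x).mul_const z).fun_neg
      exact hinner.exp
    have hh : HasDerivAt (fun x : ℝ => 1 - Real.exp (-(x * z)))
        (z * Real.exp (-(x * z))) x := by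
      have := (hasDerivAt_const x (1:ℝ)).fun_sub hexp
      simpa using this.congr_deriv (by ring)
    have := ((hg.mul hh).const_mul (-1/s))
    refine this.congr_deriv ?_
    simp only [hf']
    field_simp
    ring
  have hcont : ContinuousWithinAt F (Ici (0:ℝ)) 0 := by
    rw [ContinuousWithinAt, hF0]
    apply squeeze_zero_norm' (a := fun x : ℝ => z/s * (x ^ (1-s)))
    · filter_upwards [self_mem_nhdsWithin] with x (hx : x ∈ Ici (0:ℝ))
      rcases hx.out.eq_or_lt with rfl | hx0
      · simp [hF, Real.zero_rpow (by linarith : (1:ℝ)-s ≠ 0)]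
      · have h1 : 0 ≤ 1 - Real.exp (-(x * z)) :=
          (one_sub_exp_bounds (mul_nonneg hx0.le hz.le)).1
        have h2 : 1 - Real.exp (-(x * z)) ≤ x * z :=
          (one_sub_exp_bounds (mul_nonneg hx0.le hz.le)).2
        have hxs : (0:ℝ) ≤ x ^ (-s) := rpow_nonneg hx0.le _
        rw [hF, Real.norm_eq_abs, abs_mul, abs_mul, abs_of_nonneg hxs, abs_of_nonneg h1]
        have habs : |(-1:ℝ)/s| = 1/s := by
          rw [abs_div, abs_neg, abs_one, abs_of_pos hs0]
        rw [habs]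
        have key : x ^ (-s) * (1 - Real.exp (-(x * z))) ≤ x ^ (-s) * (x * z) :=
          mul_le_mul_of_nonneg_left h2 hxs
        have hxpow : x ^ (-s) * x = x ^ (1-s) := by
          nth_rewrite 2 [← Real.rpow_one x]
          rw [← Real.rpow_add hx0, show -s + 1 = 1 - s by ring]
        calc 1/s * (x ^ (-s) * (1 - Real.exp (-(x * z)))) ≤ 1/s * (x ^ (-s) * (x * z)) := by
              apply mul_le_mul_of_nonneg_left key (by positivity)
          _ = z/s * (x ^ (1-s)) := by rw [← mul_assoc (x ^ (-s)) x z, hxpow]; ring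
    · have hcont0 : ContinuousAt (fun x : ℝ => x ^ (1-s)) 0 :=
        Real.continuousAt_rpow_const 0 (1-s) (Or.inr (by linarith))
      have h3 : Tendsto (fun x : ℝ => z/s * (x ^ (1-s))) (𝓝[Ici (0:ℝ)] 0)
          (𝓝 (z/s * (0:ℝ) ^ (1-s))) :=
        (hcont0.tendsto.const_mul (z/s)).mono_left nhdsWithin_le_nhds
      simpa [Real.zero_rpow (by linarith : (1:ℝ)-s ≠ 0)] using h3
  have htop : Tendsto F atTop (𝓝 0) := by
    apply squeeze_zero_norm' (a := fun x : ℝ => 1/s * x ^ (-s))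
    · filter_upwards [eventually_gt_atTop (0:ℝ)] with x hx0
      have h1 : 0 ≤ 1 - Real.exp (-(x * z)) :=
        (one_sub_exp_bounds (mul_nonneg hx0.le hz.le)).1
      have hle1 : 1 - Real.exp (-(x * z)) ≤ 1 := by
        have := Real.exp_pos (-(x * z)); linarith
      have hxs : (0:ℝ) ≤ x ^ (-s) := rpow_nonneg hx0.le _
      rw [hF, Real.norm_eq_abs, abs_mul, abs_mul, abs_of_nonneg hxs, abs_of_nonneg h1,
        abs_div, abs_neg, abs_one, abs_of_pos hs0]
      calc 1/s * (x ^ (-s) * (1 - Real.exp (-(x * z)))) ≤ 1/s * (x ^ (-s) * 1) := by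
            apply mul_le_mul_of_nonneg_left (mul_le_mul_of_nonneg_left hle1 hxs) (by positivity)
        _ = 1/s * x ^ (-s) := by ring
    · simpa using (tendsto_rpow_neg_atTop hs0).const_mul (1/s)
  have key := integral_Ioi_of_hasDerivAt_of_tendsto hcont hderiv f'int htop
  rw [hF0, sub_zero] at key
  rw [hf'] at key
  rw [integral_sub T1int (T2int.const_mul _)] at key
  have hI : ∫ x in Ioi (0:ℝ), x ^ (-s) * Real.exp (-(x * z))
      = (1/z) ^ (1-s) * Real.Gamma (1-s) := by
    rw [← Real.integral_rpow_mul_exp_neg_mul_Ioi (by linarith : (0:ℝ) < 1-s) hz]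
    refine setIntegral_congr_fun measurableSet_Ioi fun x hx => ?_
    rw [show (1:ℝ)-s-1 = -s by ring, mul_comm z x]
  rw [integral_const_mul, hI, sub_eq_zero] at key
  rw [key]
  have hzpow : (0:ℝ) < z ^ (1-s) := Real.rpow_pos_of_pos hz _
  have h2 : z ^ s * z ^ (1-s) = z := by
    rw [← Real.rpow_add hz]; norm_num
  rw [one_div, Real.inv_rpow hz.le, div_mul_eq_mul_div, div_mul_eq_mul_div]
  congr 1
  calc z * ((z ^ (1-s))⁻¹ * Real.Gamma (1-s))
      = (z ^ s * z ^ (1-s)) * ((z ^ (1-s))⁻¹ * Real.Gamma (1-s)) := by rw [h2]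
    _ = Real.Gamma (1-s) * z ^ s := by
        field_simp

end AuxLemmas

open Real Set Filter Topology in
/-- Fractional moments of a positive `a`-stable random variable:
if `E[exp(-λZ)] = exp(-λ^a)` then `E[Z^s] = Γ(1-s/a)/Γ(1-s)` for `s < a`. -/
theorem stable_fractional_moments
    {Ω : Type*} [MeasureSpace Ω] [IsProbabilityMeasure (ℙ : Measure Ω)]
    {a : ℝ} (ha0 : 0 < a) (ha1 : a < 1)
    (Z : Ω → ℝ) (hZmeas : Measurable Z) (hZnn : ∀ ω, 0 ≤ Z ω)
    (hZlaw : ∀ l : ℝ, 0 ≤ l →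
      (∫ ω, Real.exp (-(l * Z ω)) ∂ℙ) = Real.exp (-(l ^ a)))
    (s : ℝ) (hs : s < a) :
    Integrable (fun ω => Z ω ^ s) ℙ ∧
    ∫ ω, Z ω ^ s ∂ℙ = Real.Gamma (1 - s/a) / Real.Gamma (1 - s) := by
  have hexpInt : ∀ l : ℝ, 0 ≤ l → Integrable (fun ω => Real.exp (-(l * Z ω))) ℙ := by
    intro l hl
    refine Integrable.mono' (integrable_const 1) (Measurable.aestronglyMeasurable (by fun_prop)) ?_
    filter_upwards with ω
    rw [Real.norm_eq_abs, abs_of_pos (Real.exp_pos _)]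
    exact Real.exp_le_one_iff.mpr (by nlinarith [hZnn ω])
  have hZpos : ∀ᵐ ω ∂ℙ, 0 < Z ω := by
    have hS : MeasurableSet {ω | Z ω = 0} := hZmeas (measurableSet_singleton 0)
    have hbound : ∀ n : ℕ, (ℙ {ω | Z ω = 0}).toReal ≤ Real.exp (-((n:ℝ) ^ a)) := by
      intro n
      have h1 : ∀ ω, Set.indicator {ω | Z ω = 0} (fun _ => (1:ℝ)) ω
          ≤ Real.exp (-((n:ℝ) * Z ω)) := by
        intro ω
        by_cases h : Z ω = 0
        · rw [Set.indicator_of_mem (show ω ∈ {ω | Z ω = 0} from h)]; simp [h]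
        · rw [Set.indicator_of_notMem (show ω ∉ {ω | Z ω = 0} from h)]; positivity
      have hind : Integrable (Set.indicator {ω | Z ω = 0} (fun _ => (1:ℝ))) ℙ :=
        (integrable_indicator_iff hS).mpr (integrableOn_const (measure_ne_top _ _))
      have h2 := integral_mono hind (hexpInt n n.cast_nonneg) h1
      rwa [integral_indicator_const _ hS, smul_eq_mul, mul_one,
        hZlaw n n.cast_nonneg] at h2
    have h3 : Tendsto (fun n : ℕ => Real.exp (-((n:ℝ) ^ a))) atTop (𝓝 0) := by
      apply Real.tendsto_exp_atBot.comp
      apply tendsto_neg_atTop_atBot.comp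
      exact (tendsto_rpow_atTop ha0).comp tendsto_natCast_atTop_atTop
    have h4 : (ℙ {ω | Z ω = 0}).toReal ≤ 0 := ge_of_tendsto' h3 hbound
    have h5 : ℙ {ω | Z ω = 0} = 0 := by
      have := le_antisymm h4 ENNReal.toReal_nonneg
      rcases (ENNReal.toReal_eq_zero_iff _).mp this with h | h
      · exact h
      · exact absurd h (measure_ne_top _ _)
    rw [ae_iff]
    exact measure_mono_null (fun ω h => le_antisymm (not_lt.mp h) (hZnn ω)) h5
  rcases lt_trichotomy s 0 with hneg | rfl | hpos
  · -- s < 0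
    have hGmeas : AEStronglyMeasurable
        (fun p : Ω × ℝ => p.2 ^ (-s-1) * Real.exp (-(p.2 * Z p.1)))
        (Measure.prod ℙ (volume.restrict (Ioi (0:ℝ)))) := by
      apply Measurable.aestronglyMeasurable
      fun_prop
    have hc1 : ∀ᵐ l ∂(volume.restrict (Ioi (0:ℝ))),
        Integrable (fun ω => l ^ (-s-1) * Real.exp (-(l * Z ω))) ℙ := by
      filter_upwards [ae_restrict_mem measurableSet_Ioi] with l hl
      exact (hexpInt l (le_of_lt hl)).const_mul _
    have hmarg : IntegrableOn (fun l : ℝ => l ^ (-s-1) * Real.exp (-l ^ a)) (Ioi (0:ℝ)) :=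
      aux_int_rpow_exp_rpow (by linarith) ha0
    have hc2 : Integrable
        (fun l : ℝ => ∫ ω, ‖l ^ (-s-1) * Real.exp (-(l * Z ω))‖ ∂ℙ)
        (volume.restrict (Ioi (0:ℝ))) := by
      refine hmarg.congr ?_
      filter_upwards [ae_restrict_mem measurableSet_Ioi] with l hl
      have hl0 : (0:ℝ) < l := hl
      have : ∀ ω, ‖l ^ (-s-1) * Real.exp (-(l * Z ω))‖
          = l ^ (-s-1) * Real.exp (-(l * Z ω)) := by
        intro ω
        rw [Real.norm_eq_abs, abs_of_nonneg]
        positivity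
      rw [show (∫ ω, ‖l ^ (-s-1) * Real.exp (-(l * Z ω))‖ ∂ℙ)
          = ∫ ω, l ^ (-s-1) * Real.exp (-(l * Z ω)) ∂ℙ from integral_congr_ae
            (Eventually.of_forall this),
        integral_const_mul, hZlaw l hl0.le]
    have hGint : Integrable (fun p : Ω × ℝ => p.2 ^ (-s-1) * Real.exp (-(p.2 * Z p.1)))
        (Measure.prod ℙ (volume.restrict (Ioi (0:ℝ)))) :=
      (integrable_prod_iff' hGmeas).mpr ⟨hc1, hc2⟩
    have hswap := integral_integral_swap
      (f := fun (ω : Ω) (l : ℝ) => l ^ (-s-1) * Real.exp (-(l * Z ω))) hGint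
    -- inner integral in λ equals Γ(-s) * Z ω ^ s for a.e. ω
    have hinner : ∀ᵐ ω ∂ℙ, (∫ l in Ioi (0:ℝ), l ^ (-s-1) * Real.exp (-(l * Z ω)))
        = Real.Gamma (-s) * Z ω ^ s := by
      filter_upwards [hZpos] with ω hω
      have h1 := Real.integral_rpow_mul_exp_neg_mul_Ioi
        (a := -s) (r := Z ω) (by linarith) hω
      have h2 : (∫ l in Ioi (0:ℝ), l ^ (-s-1) * Real.exp (-(l * Z ω)))
          = ∫ t in Ioi (0:ℝ), t ^ (-s-1) * Real.exp (-(Z ω * t)) := by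
        refine setIntegral_congr_fun measurableSet_Ioi fun t ht => ?_
        rw [mul_comm t (Z ω)]
      rw [h2, show -s-1 = -s-1 from rfl]
      rw [show (∫ t in Ioi (0:ℝ), t ^ (-s-1) * Real.exp (-(Z ω * t)))
          = ∫ t in Ioi (0:ℝ), t ^ (-s-1) * Real.exp (-(Z ω * t)) from rfl] at h1 ⊢
      rw [h1]
      rw [one_div, Real.inv_rpow hω.le, ← Real.rpow_neg hω.le, neg_neg]
      ring
    -- compute the outer integral in λ
    have houter : (∫ l in Ioi (0:ℝ), ∫ ω, l ^ (-s-1) * Real.exp (-(l * Z ω)) ∂ℙ)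
        = 1/a * Real.Gamma (-s/a) := by
      have heq : ∀ᵐ l ∂(volume.restrict (Ioi (0:ℝ))),
          (∫ ω, l ^ (-s-1) * Real.exp (-(l * Z ω)) ∂ℙ)
            = l ^ (-s-1) * Real.exp (-l ^ a) := by
        filter_upwards [ae_restrict_mem measurableSet_Ioi] with l hl
        rw [integral_const_mul, hZlaw l (le_of_lt hl)]
      rw [integral_congr_ae heq, integral_rpow_mul_exp_neg_rpow ha0 (by linarith),
        show -s-1+1 = -s by ring]
    have hIntZ : Integrable (fun ω => Real.Gamma (-s) * Z ω ^ s) ℙ :=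
      (hGint.integral_prod_left).congr hinner
    have hGam : (0:ℝ) < Real.Gamma (-s) := Real.Gamma_pos_of_pos (by linarith)
    have hIntZs : Integrable (fun ω => Z ω ^ s) ℙ := by
      have := hIntZ.const_mul (Real.Gamma (-s))⁻¹
      refine this.congr (Eventually.of_forall fun ω => ?_)
      field_simp
    refine ⟨hIntZs, ?_⟩
    have hval : Real.Gamma (-s) * ∫ ω, Z ω ^ s ∂ℙ = 1/a * Real.Gamma (-s/a) := by
      rw [← integral_const_mul, ← integral_congr_ae hinner, hswap, houter]
    have e1 : Real.Gamma (1 - s) = -s * Real.Gamma (-s) := by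
      rw [show (1:ℝ) - s = -s + 1 by ring, Real.Gamma_add_one (by linarith : -s ≠ 0)]
    have e2 : Real.Gamma (1 - s/a) = -s/a * Real.Gamma (-s/a) := by
      rw [show (1:ℝ) - s/a = -s/a + 1 by ring,
        Real.Gamma_add_one (div_ne_zero (by linarith) ha0.ne')]
    have hs0 : s ≠ 0 := by linarith
    have hval2 : Real.Gamma (-s/a) = a * (Real.Gamma (-s) * ∫ ω, Z ω ^ s ∂ℙ) := by
      rw [hval]; field_simp
    rw [e1, e2, hval2]
    field_simp
  · refine ⟨by simp, ?_⟩
    simp [Real.Gamma_one]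
  · -- 0 < s < a
    have hs1 : s < 1 := lt_trans hs ha1
    have hHmeas : AEStronglyMeasurable
        (fun p : Ω × ℝ => p.2 ^ (-s-1) * (1 - Real.exp (-(p.2 * Z p.1))))
        (Measure.prod ℙ (volume.restrict (Ioi (0:ℝ)))) := by
      apply Measurable.aestronglyMeasurable
      fun_prop
    have hc1 : ∀ᵐ l ∂(volume.restrict (Ioi (0:ℝ))),
        Integrable (fun ω => l ^ (-s-1) * (1 - Real.exp (-(l * Z ω)))) ℙ := by
      filter_upwards [ae_restrict_mem measurableSet_Ioi] with l hl
      exact ((integrable_const (1:ℝ)).sub (hexpInt l (le_of_lt hl))).const_mul _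
    have hmarg : IntegrableOn (fun l : ℝ => l ^ (-s-1) * (1 - Real.exp (-(l ^ a))))
        (Ioi (0:ℝ)) := by
      have := aux_int_one_sub_exp (r := s) (p := a) (c := 1) hpos hs zero_le_one
      refine this.congr_fun (fun x hx => ?_) measurableSet_Ioi
      beta_reduce
      rw [one_mul]
    have hexpω : ∀ l : ℝ, 0 ≤ l →
        (∫ ω, (1 - Real.exp (-(l * Z ω))) ∂ℙ) = 1 - Real.exp (-(l ^ a)) := by
      intro l hl
      rw [integral_sub (integrable_const 1) (hexpInt l hl), hZlaw l hl]
      simp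
    have hc2 : Integrable
        (fun l : ℝ => ∫ ω, ‖l ^ (-s-1) * (1 - Real.exp (-(l * Z ω)))‖ ∂ℙ)
        (volume.restrict (Ioi (0:ℝ))) := by
      refine hmarg.congr ?_
      filter_upwards [ae_restrict_mem measurableSet_Ioi] with l hl
      have hl0 : (0:ℝ) < l := hl
      have hnrm : ∀ ω, ‖l ^ (-s-1) * (1 - Real.exp (-(l * Z ω)))‖
          = l ^ (-s-1) * (1 - Real.exp (-(l * Z ω))) := by
        intro ω
        rw [Real.norm_eq_abs, abs_of_nonneg]
        exact mul_nonneg (Real.rpow_nonneg hl0.le _)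
          (one_sub_exp_bounds (mul_nonneg hl0.le (hZnn ω))).1
      rw [show (∫ ω, ‖l ^ (-s-1) * (1 - Real.exp (-(l * Z ω)))‖ ∂ℙ)
          = ∫ ω, l ^ (-s-1) * (1 - Real.exp (-(l * Z ω))) ∂ℙ from integral_congr_ae
            (Eventually.of_forall hnrm),
        integral_const_mul, hexpω l hl0.le]
    have hHint : Integrable
        (fun p : Ω × ℝ => p.2 ^ (-s-1) * (1 - Real.exp (-(p.2 * Z p.1))))
        (Measure.prod ℙ (volume.restrict (Ioi (0:ℝ)))) :=
      (integrable_prod_iff' hHmeas).mpr ⟨hc1, hc2⟩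
    have hswap := integral_integral_swap
      (f := fun (ω : Ω) (l : ℝ) => l ^ (-s-1) * (1 - Real.exp (-(l * Z ω)))) hHint
    have hinner : ∀ ω, (∫ l in Ioi (0:ℝ), l ^ (-s-1) * (1 - Real.exp (-(l * Z ω))))
        = Real.Gamma (1-s) / s * Z ω ^ s := fun ω =>
      aux_integral_one_sub_exp hpos hs1 (hZnn ω)
    have houter : (∫ l in Ioi (0:ℝ), ∫ ω, l ^ (-s-1) * (1 - Real.exp (-(l * Z ω))) ∂ℙ)
        = Real.Gamma (1 - s/a) / s := by
      have heq : ∀ᵐ l ∂(volume.restrict (Ioi (0:ℝ))),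
          (∫ ω, l ^ (-s-1) * (1 - Real.exp (-(l * Z ω))) ∂ℙ)
            = l ^ (-s-1) * (1 - Real.exp (-(l ^ a))) := by
        filter_upwards [ae_restrict_mem measurableSet_Ioi] with l hl
        rw [integral_const_mul, hexpω l (le_of_lt hl)]
      rw [integral_congr_ae heq]
      -- substitution y = l ^ a
      have h0 := MeasureTheory.integral_comp_rpow_Ioi
        (fun y : ℝ => y ^ (-(s/a)-1) * (1 - Real.exp (-(y * 1)))) (p := a) ha0.ne'
      have hg := aux_integral_one_sub_exp (s := s/a) (z := 1)
        (div_pos hpos ha0) ((div_lt_one ha0).mpr hs) zero_le_one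
      rw [hg, Real.one_rpow, mul_one] at h0
      have hL : (∫ x in Ioi (0:ℝ), (|a| * x ^ (a-1)) •
            ((x ^ a) ^ (-(s/a)-1) * (1 - Real.exp (-(x ^ a * 1)))))
          = a * ∫ l in Ioi (0:ℝ), l ^ (-s-1) * (1 - Real.exp (-(l ^ a))) := by
        rw [← integral_const_mul]
        refine setIntegral_congr_fun measurableSet_Ioi fun x hx => ?_
        have hx0 : (0:ℝ) < x := hx
        rw [smul_eq_mul, abs_of_pos ha0, mul_one, ← Real.rpow_mul hx0.le,
          show a * (-(s/a)-1) = -s-a by field_simp]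
        rw [show (a * x ^ (a-1)) * (x ^ (-s-a) * (1 - Real.exp (-x ^ a)))
            = a * ((x ^ (a-1) * x ^ (-s-a)) * (1 - Real.exp (-x ^ a))) by ring,
          ← Real.rpow_add hx0, show a-1+(-s-a) = -s-1 by ring]
      rw [hL] at h0
      have h1 : a * (∫ l in Ioi (0:ℝ), l ^ (-s-1) * (1 - Real.exp (-(l ^ a))))
          = a * (Real.Gamma (1 - s/a) / s) := by
        rw [h0]; field_simp
      exact mul_left_cancel₀ ha0.ne' h1
    have hGam : (0:ℝ) < Real.Gamma (1-s) := Real.Gamma_pos_of_pos (by linarith)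
    have hIntZ : Integrable (fun ω => Real.Gamma (1-s) / s * Z ω ^ s) ℙ :=
      (hHint.integral_prod_left).congr (Eventually.of_forall hinner)
    have hIntZs : Integrable (fun ω => Z ω ^ s) ℙ := by
      have := hIntZ.const_mul (Real.Gamma (1-s) / s)⁻¹
      refine this.congr (Eventually.of_forall fun ω => ?_)
      field_simp
    refine ⟨hIntZs, ?_⟩
    have hval : Real.Gamma (1-s) / s * ∫ ω, Z ω ^ s ∂ℙ = Real.Gamma (1 - s/a) / s := by
      rw [← integral_const_mul, ← integral_congr_ae (Eventually.of_forall hinner),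
        hswap, houter]
    have hdiv : (1:ℝ) - s/a = (a-s)/a := by
      field_simp [ha0.ne']
    have hval2 : Real.Gamma (1-s) * ∫ ω, Z ω ^ s ∂ℙ = Real.Gamma (1 - s/a) := by
      field_simp at hval
      rw [hdiv]
      exact hval
    rw [eq_div_iff hGam.ne']
    linear_combination hval2
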